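/- Let S_N = Σ over (e₁,e₂) ∈ N_0² with 3^{e₁}·5^{e₂} ≤ N of 3^{e₁}·5^{e₂}. Then S_N/(N·log N) → 1/(log 3·log 5) as N → ∞. -/

import Mathlib

noncomputable def S17 (N : ℕ) : ℝ :=
  ∑ p ∈ (Finset.range (N + 1) ×ˢ Finset.range (N + 1)).filter
      (fun p => 3 ^ p.1 * 5 ^ p.2 ≤ N),
    ((3 : ℝ) ^ p.1 * 5 ^ p.2)

open Filter MeasureTheory Finset Set AddCircle
open scoped Real

instance : Fact ((0:ℝ) < 1) := ⟨one_pos⟩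

noncomputable section

lemma vol_eq_haar : (volume : Measure UnitAddCircle) = haarAddCircle := by
  rw [volume_eq_smul_haarAddCircle]
  simp

lemma fourier_apply_add' {n : ℤ} {x y : UnitAddCircle} :
    fourier n (x + y) = fourier n x * fourier n y := by
  rw [fourier_apply, fourier_apply, fourier_apply, smul_add, toCircle_add, Circle.coe_mul]

lemma fourier_apply_nsmul {n : ℤ} (x δ : UnitAddCircle) (b : ℕ) :
    fourier n (x + b • δ) = fourier n x * (fourier n δ : ℂ) ^ b := by
  induction b with
  | zero => simp
  | succ b ih =>
    rw [succ_nsmul, ← add_assoc, fourier_apply_add', ih, pow_succ, mul_assoc]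

lemma integral_fourier_zero' {n : ℤ} (hn : n ≠ 0) :
    ∫ x : UnitAddCircle, fourier n x ∂haarAddCircle = 0 := by
  exact integral_eq_zero_of_add_right_eq_neg (μ := haarAddCircle)
    (fourier_add_half_inv_index hn one_pos)

lemma norm_geom_sum_le {z : ℂ} (hz : z ≠ 1) (B : ℕ) :
    ‖∑ b ∈ range B, z ^ b‖ ≤ (‖z‖ ^ B + 1) / ‖z - 1‖ := by
  rw [geom_sum_eq hz]
  rw [norm_div]
  gcongr
  calc ‖z ^ B - 1‖ ≤ ‖z ^ B‖ + ‖(1:ℂ)‖ := norm_sub_le _ _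
    _ = ‖z‖ ^ B + 1 := by rw [norm_pow, norm_one]

end

section Weyl

open scoped ComplexConjugate

variable (δ : UnitAddCircle)

def WeylP (f : C(UnitAddCircle, ℂ)) : Prop :=
  ∀ ε > (0:ℝ), ∃ B₀ : ℕ, ∀ B ≥ B₀, ∀ x : UnitAddCircle,
    ‖(B:ℂ)⁻¹ * (∑ b ∈ range B, f (x + b • δ)) - ∫ y, f y ∂haarAddCircle‖ ≤ ε

lemma cm_integrable (f : C(UnitAddCircle, ℂ)) :
    Integrable (fun y => f y) (haarAddCircle) := by
  refine (map_continuous f).integrable_of_hasCompactSupport ?_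
  exact HasCompactSupport.of_compactSpace _

lemma weylP_fourier (hδ : ∀ n : ℤ, n ≠ 0 → fourier n δ ≠ 1) (n : ℤ) :
    WeylP δ (fourier n) := by
  rcases eq_or_ne n 0 with rfl | hn
  · intro ε hε
    refine ⟨1, fun B hB x => ?_⟩
    have h1 : ∀ b ∈ range B, (fourier 0 : C(UnitAddCircle, ℂ)) (x + b • δ) = 1 :=
      fun b _ => fourier_zero
    rw [Finset.sum_congr rfl h1]
    have h2 : ∫ y : UnitAddCircle, (fourier 0 : C(UnitAddCircle, ℂ)) y ∂haarAddCircle = 1 := by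
      simp_rw [fourier_zero]
      simp
    rw [h2, Finset.sum_const, card_range, nsmul_eq_mul, mul_one]
    have hBpos : 0 < B := hB
    rw [inv_mul_cancel₀ (Nat.cast_ne_zero.mpr hBpos.ne' : (B:ℂ) ≠ 0), sub_self, norm_zero]
    exact le_of_lt hε
  · intro ε hε
    set z : ℂ := fourier n δ with hz
    have hzne : z ≠ 1 := hδ n hn
    have hznorm : ‖z‖ = 1 := by
      rw [hz, fourier_apply]
      exact Circle.norm_coe _
    have hd : (0:ℝ) < ‖z - 1‖ := by
      rw [norm_pos_iff]
      exact sub_ne_zero.mpr hzne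
    obtain ⟨B₀, hB₀⟩ := exists_nat_gt (2 / (‖z - 1‖ * ε))
    refine ⟨B₀ + 1, fun B hB x => ?_⟩
    have hBpos : 0 < B := lt_of_lt_of_le (Nat.succ_pos _) hB
    have hint : ∫ y : UnitAddCircle, (fourier n : C(UnitAddCircle, ℂ)) y ∂haarAddCircle = 0 :=
      integral_fourier_zero' hn
    rw [hint, sub_zero]
    have hsum : ∑ b ∈ range B, (fourier n : C(UnitAddCircle, ℂ)) (x + b • δ)
        = fourier n x * ∑ b ∈ range B, z ^ b := by
      rw [Finset.mul_sum]
      exact Finset.sum_congr rfl fun b _ => fourier_apply_nsmul x δ b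
    rw [hsum, norm_mul, norm_mul, norm_inv]
    have h1 : ‖(fourier n : C(UnitAddCircle, ℂ)) x‖ = 1 := by
      rw [fourier_apply]; exact Circle.norm_coe _
    rw [h1, one_mul, Complex.norm_natCast]
    have h2 : ‖∑ b ∈ range B, z ^ b‖ ≤ 2 / ‖z - 1‖ := by
      calc ‖∑ b ∈ range B, z ^ b‖ ≤ (‖z‖ ^ B + 1) / ‖z - 1‖ := norm_geom_sum_le hzne B
        _ = 2 / ‖z - 1‖ := by rw [hznorm, one_pow]; norm_num
    have hBR : (2 / (‖z - 1‖ * ε)) < B := by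
      refine lt_of_lt_of_le hB₀ ?_
      exact_mod_cast (Nat.le_succ B₀).trans hB
    calc (B:ℝ)⁻¹ * ‖∑ b ∈ range B, z ^ b‖ ≤ (B:ℝ)⁻¹ * (2 / ‖z - 1‖) := by
          gcongr
      _ ≤ ε := by
          rw [inv_mul_le_iff₀ (by exact_mod_cast hBpos), div_le_iff₀ hd]
          rw [div_lt_iff₀ (mul_pos hd hε)] at hBR
          nlinarith

end Weyl

section Weyl2

variable {δ : UnitAddCircle}

lemma weylP_add {f g : C(UnitAddCircle, ℂ)} (hf : WeylP δ f) (hg : WeylP δ g) :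
    WeylP δ (f + g) := by
  intro ε hε
  obtain ⟨B₁, h₁⟩ := hf (ε/2) (by linarith)
  obtain ⟨B₂, h₂⟩ := hg (ε/2) (by linarith)
  refine ⟨max B₁ B₂, fun B hB x => ?_⟩
  have e1 := h₁ B (le_trans (le_max_left _ _) hB) x
  have e2 := h₂ B (le_trans (le_max_right _ _) hB) x
  have hint : ∫ y, (f + g) y ∂haarAddCircle
      = (∫ y, f y ∂haarAddCircle) + ∫ y, g y ∂haarAddCircle := by
    simp only [ContinuousMap.add_apply]
    exact integral_add (cm_integrable f) (cm_integrable g)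
  have hsum : ∑ b ∈ range B, (f + g) (x + b • δ)
      = (∑ b ∈ range B, f (x + b • δ)) + ∑ b ∈ range B, g (x + b • δ) := by
    simp [Finset.sum_add_distrib]
  calc ‖(B:ℂ)⁻¹ * (∑ b ∈ range B, (f+g) (x + b • δ)) - ∫ y, (f+g) y ∂haarAddCircle‖
      = ‖((B:ℂ)⁻¹ * (∑ b ∈ range B, f (x + b • δ)) - ∫ y, f y ∂haarAddCircle)
        + ((B:ℂ)⁻¹ * (∑ b ∈ range B, g (x + b • δ)) - ∫ y, g y ∂haarAddCircle)‖ := by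
        rw [hint, hsum]; ring_nf
    _ ≤ _ := norm_add_le _ _
    _ ≤ ε/2 + ε/2 := add_le_add e1 e2
    _ = ε := by ring

lemma weylP_smul {f : C(UnitAddCircle, ℂ)} (c : ℂ) (hf : WeylP δ f) :
    WeylP δ (c • f) := by
  rcases eq_or_ne c 0 with rfl | hc
  · intro ε hε
    refine ⟨0, fun B _ x => ?_⟩
    simp only [ContinuousMap.smul_apply, zero_smul, smul_eq_mul, zero_mul]
    simpa using hε.le
  · intro ε hε
    obtain ⟨B₀, h₀⟩ := hf (ε / ‖c‖) (div_pos hε (norm_pos_iff.mpr hc))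
    refine ⟨B₀, fun B hB x => ?_⟩
    have e := h₀ B hB x
    have hint : ∫ y, (c • f) y ∂haarAddCircle = c * ∫ y, f y ∂haarAddCircle := by
      simp only [ContinuousMap.smul_apply, smul_eq_mul]
      exact integral_const_mul c _
    have hkey : (B:ℂ)⁻¹ * (∑ b ∈ range B, (c • f) (x + b • δ)) - ∫ y, (c • f) y ∂haarAddCircle
        = c * ((B:ℂ)⁻¹ * (∑ b ∈ range B, f (x + b • δ)) - ∫ y, f y ∂haarAddCircle) := by
      rw [hint]
      simp only [ContinuousMap.smul_apply, smul_eq_mul, ← Finset.mul_sum]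
      ring
    rw [hkey, norm_mul]
    calc ‖c‖ * ‖_‖ ≤ ‖c‖ * (ε / ‖c‖) := by gcongr
      _ = ε := by rw [mul_comm, div_mul_cancel₀ _ (norm_ne_zero_iff.mpr hc)]

theorem weylP_all (hδ : ∀ n : ℤ, n ≠ 0 → fourier n δ ≠ 1) (f : C(UnitAddCircle, ℂ)) :
    WeylP δ f := by
  have hspan : ∀ g ∈ Submodule.span ℂ (Set.range (@fourier 1)), WeylP δ g := by
    intro g hg
    induction hg using Submodule.span_induction with
    | mem g hg => obtain ⟨n, rfl⟩ := hg; exact weylP_fourier δ hδ n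
    | zero =>
        have : (0 : C(UnitAddCircle, ℂ)) = (0:ℂ) • 0 := (zero_smul ℂ _).symm
        rw [this]
        exact weylP_smul _ (by
          intro ε hε
          exact ⟨0, fun B _ x => by simpa using hε.le⟩)
    | add g h _ _ hg hh => exact weylP_add hg hh
    | smul c g _ hg => exact weylP_smul c hg
  intro ε hε
  have hmem : f ∈ closure ((Submodule.span ℂ (Set.range (@fourier 1)) : Submodule ℂ _) : Set _) := by
    rw [← Submodule.topologicalClosure_coe, span_fourier_closure_eq_top]
    trivial
  obtain ⟨g, hgmem, hgd⟩ := Metric.mem_closure_iff.mp hmem (ε/3) (by linarith)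
  obtain ⟨B₀, h₀⟩ := hspan g hgmem (ε/3) (by linarith)
  refine ⟨max B₀ 1, fun B hB x => ?_⟩
  have hB1 : 1 ≤ B := le_trans (le_max_right _ _) hB
  have hBpos : (0:ℝ) < B := by exact_mod_cast hB1
  have hptwise : ∀ y : UnitAddCircle, ‖f y - g y‖ ≤ ε/3 := by
    intro y
    calc ‖f y - g y‖ = dist (f y) (g y) := (dist_eq_norm _ _).symm
      _ ≤ dist f g := ContinuousMap.dist_apply_le_dist y
      _ ≤ ε/3 := hgd.le
  have havg : ‖(B:ℂ)⁻¹ * (∑ b ∈ range B, f (x + b • δ))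
      - (B:ℂ)⁻¹ * (∑ b ∈ range B, g (x + b • δ))‖ ≤ ε/3 := by
    rw [← mul_sub, ← Finset.sum_sub_distrib, norm_mul, norm_inv, Complex.norm_natCast]
    calc (B:ℝ)⁻¹ * ‖∑ b ∈ range B, (f (x + b • δ) - g (x + b • δ))‖
        ≤ (B:ℝ)⁻¹ * ∑ b ∈ range B, ‖f (x + b • δ) - g (x + b • δ)‖ := by
          gcongr; exact norm_sum_le _ _
      _ ≤ (B:ℝ)⁻¹ * ∑ b ∈ range B, (ε/3) := by
          gcongr with b hb
          exact hptwise _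
      _ = (B:ℝ)⁻¹ * (B * (ε/3)) := by rw [Finset.sum_const, card_range, nsmul_eq_mul]
      _ = ε/3 := by field_simp
  have hintdiff : ‖(∫ y, g y ∂haarAddCircle) - ∫ y, f y ∂haarAddCircle‖ ≤ ε/3 := by
    rw [← integral_sub (cm_integrable g) (cm_integrable f)]
    have := norm_integral_le_of_norm_le_const (μ := (haarAddCircle : Measure UnitAddCircle))
      (C := ε/3) (f := fun y => g y - f y) (Filter.Eventually.of_forall (fun y => by
        rw [norm_sub_rev]; exact hptwise y))
    simpa using this
  have e := h₀ B (le_trans (le_max_left _ _) hB) x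
  calc ‖(B:ℂ)⁻¹ * (∑ b ∈ range B, f (x + b • δ)) - ∫ y, f y ∂haarAddCircle‖
      = ‖((B:ℂ)⁻¹ * (∑ b ∈ range B, f (x + b • δ)) - (B:ℂ)⁻¹ * (∑ b ∈ range B, g (x + b • δ)))
        + (((B:ℂ)⁻¹ * (∑ b ∈ range B, g (x + b • δ)) - ∫ y, g y ∂haarAddCircle)
        + ((∫ y, g y ∂haarAddCircle) - ∫ y, f y ∂haarAddCircle))‖ := by ring_nf
    _ ≤ ‖_‖ + ‖_ + _‖ := norm_add_le _ _
    _ ≤ ε/3 + (ε/3 + ε/3) := add_le_add havg (le_trans (norm_add_le _ _) (add_le_add e hintdiff))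
    _ = ε := by ring

end Weyl2

theorem weylP_real {δ : UnitAddCircle} (hδ : ∀ n : ℤ, n ≠ 0 → fourier n δ ≠ 1)
    (f : C(UnitAddCircle, ℝ)) :
    ∀ ε > (0:ℝ), ∃ B₀ : ℕ, ∀ B ≥ B₀, ∀ x : UnitAddCircle,
      |(B:ℝ)⁻¹ * (∑ b ∈ range B, f (x + b • δ)) - ∫ y, f y ∂haarAddCircle| ≤ ε := by
  intro ε hε
  set fC : C(UnitAddCircle, ℂ) :=
    ⟨fun y => (f y : ℂ), Complex.continuous_ofReal.comp (map_continuous f)⟩ with hfC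
  obtain ⟨B₀, h₀⟩ := weylP_all hδ fC ε hε
  refine ⟨B₀, fun B hB x => ?_⟩
  have e := h₀ B hB x
  have hint : ∫ y, fC y ∂haarAddCircle = ((∫ y, f y ∂haarAddCircle : ℝ) : ℂ) := by
    exact integral_ofReal
  have hcast : (B:ℂ)⁻¹ * (∑ b ∈ range B, fC (x + b • δ)) - ∫ y, fC y ∂haarAddCircle
      = (((B:ℝ)⁻¹ * (∑ b ∈ range B, f (x + b • δ)) - ∫ y, f y ∂haarAddCircle : ℝ) : ℂ) := by
    rw [hint]
    push_cast
    rfl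
  rw [hcast] at e
  rwa [Complex.norm_real, Real.norm_eq_abs] at e

section Sandwich

open Real intervalIntegral

noncomputable def gfun (t : ℝ) : ℝ := Real.exp (-(Real.log 3) * Int.fract t)

noncomputable def Ival : ℝ := 2 / (3 * Real.log 3)

lemma integral_exp_base : ∫ x in (0:ℝ)..1, Real.exp (-(Real.log 3) * x) = Ival := by
  have h3 : Real.log 3 ≠ 0 := by
    have := Real.log_pos (by norm_num : (1:ℝ) < 3)
    linarith
  have hc : (-(Real.log 3)) ≠ 0 := by simpa using h3
  have := intervalIntegral.integral_comp_mul_left (a := (0:ℝ)) (b := 1)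
    (fun x => Real.exp x) hc
  rw [this]
  rw [integral_exp]
  have he : Real.exp (-Real.log 3) = 1/3 := by
    rw [Real.exp_neg, Real.exp_log (by norm_num : (0:ℝ) < 3)]
    norm_num
  rw [mul_zero, mul_one, Real.exp_zero, he, Ival]
  rw [smul_eq_mul]
  field_simp
  ring

noncomputable def upf (δ : ℝ) : ℝ → ℝ := fun t => Real.exp (-(Real.log 3) * t) + (2/3) * max 0 ((t - (1-δ))/δ)

noncomputable def lowf (δ : ℝ) : ℝ → ℝ := fun t => Real.exp (-(Real.log 3) * t) - (2/3) * max 0 ((δ - t)/δ)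

lemma upf_cont (δ : ℝ) : Continuous (upf δ) := by
  unfold upf
  fun_prop

lemma lowf_cont (δ : ℝ) : Continuous (lowf δ) := by
  unfold lowf
  fun_prop

lemma upf_endpoints {δ : ℝ} (h0 : 0 < δ) (h1 : δ ≤ 1) : upf δ 0 = upf δ (0 + 1) := by
  unfold upf
  rw [zero_add, mul_zero, Real.exp_zero, mul_one]
  have e1 : max 0 ((0 - (1-δ))/δ) = 0 := by
    rw [max_eq_left]
    apply div_nonpos_of_nonpos_of_nonneg <;> linarith
  have e2 : max 0 ((1 - (1-δ))/δ) = 1 := by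
    rw [show (1 - (1-δ))/δ = δ/δ by ring_nf, div_self h0.ne']
    norm_num
  rw [e1, e2, Real.exp_neg, Real.exp_log (by norm_num : (0:ℝ) < 3)]
  norm_num

lemma lowf_endpoints {δ : ℝ} (h0 : 0 < δ) (h1 : δ ≤ 1) : lowf δ 0 = lowf δ (0 + 1) := by
  unfold lowf
  rw [zero_add, mul_zero, Real.exp_zero, mul_one]
  have e1 : max 0 ((δ - 0)/δ) = 1 := by
    rw [sub_zero, div_self h0.ne']
    norm_num
  have e2 : max 0 ((δ - 1)/δ) = 0 := by
    rw [max_eq_left]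
    apply div_nonpos_of_nonpos_of_nonneg <;> linarith
  rw [e1, e2, Real.exp_neg, Real.exp_log (by norm_num : (0:ℝ) < 3)]
  norm_num

lemma upf_integral_le {δ : ℝ} (h0 : 0 < δ) (h1 : δ ≤ 1) :
    ∫ x in (0:ℝ)..1, upf δ x ≤ Ival + (2/3) * δ := by
  have hramp : ∫ x in (0:ℝ)..1, max 0 ((x - (1-δ))/δ) ≤ δ := by
    have hia : IntervalIntegrable (fun x => max 0 ((x - (1-δ))/δ)) volume 0 (1-δ) := by
      apply Continuous.intervalIntegrable; fun_prop
    have hib : IntervalIntegrable (fun x => max 0 ((x - (1-δ))/δ)) volume (1-δ) 1 := by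
      apply Continuous.intervalIntegrable; fun_prop
    rw [← intervalIntegral.integral_add_adjacent_intervals hia hib]
    have hz : ∫ x in (0:ℝ)..(1-δ), max 0 ((x - (1-δ))/δ) = 0 := by
      rw [intervalIntegral.integral_congr (g := fun _ => 0)]
      · simp
      · intro x hx
        rw [Set.uIcc_of_le (by linarith : (0:ℝ) ≤ 1-δ)] at hx
        have : (x - (1-δ))/δ ≤ 0 :=
          div_nonpos_of_nonpos_of_nonneg (by linarith [hx.2]) h0.le
        simp [max_eq_left this]
    have hb : ∫ x in (1-δ:ℝ)..1, max 0 ((x - (1-δ))/δ) ≤ ∫ _x in (1-δ:ℝ)..1, (1:ℝ) := by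
      apply intervalIntegral.integral_mono_on (by linarith) hib
        (by apply Continuous.intervalIntegrable; fun_prop)
      intro x hx
      apply max_le (by norm_num)
      rw [div_le_one h0]
      linarith [hx.2]
    rw [hz, zero_add]
    calc _ ≤ ∫ _x in (1-δ:ℝ)..1, (1:ℝ) := hb
      _ = δ := by simp
  have hsplit : ∫ x in (0:ℝ)..1, upf δ x
      = (∫ x in (0:ℝ)..1, Real.exp (-(Real.log 3) * x))
        + (2/3) * ∫ x in (0:ℝ)..1, max 0 ((x - (1-δ))/δ) := by
    unfold upf
    rw [← intervalIntegral.integral_const_mul]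
    rw [← intervalIntegral.integral_add]
    · apply Continuous.intervalIntegrable; fun_prop
    · apply Continuous.intervalIntegrable; fun_prop
  rw [hsplit, integral_exp_base]
  have : (2:ℝ)/3 * ∫ x in (0:ℝ)..1, max 0 ((x - (1-δ))/δ) ≤ (2/3) * δ := by
    apply mul_le_mul_of_nonneg_left hramp (by norm_num)
  linarith

lemma lowf_integral_ge {δ : ℝ} (h0 : 0 < δ) (h1 : δ ≤ 1) :
    Ival - (2/3) * δ ≤ ∫ x in (0:ℝ)..1, lowf δ x := by
  have hramp : ∫ x in (0:ℝ)..1, max 0 ((δ - x)/δ) ≤ δ := by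
    have hia : IntervalIntegrable (fun x => max 0 ((δ - x)/δ)) volume 0 δ := by
      apply Continuous.intervalIntegrable; fun_prop
    have hib : IntervalIntegrable (fun x => max 0 ((δ - x)/δ)) volume δ 1 := by
      apply Continuous.intervalIntegrable; fun_prop
    rw [← intervalIntegral.integral_add_adjacent_intervals hia hib]
    have hz : ∫ x in (δ:ℝ)..1, max 0 ((δ - x)/δ) = 0 := by
      rw [intervalIntegral.integral_congr (g := fun _ => 0)]
      · simp
      · intro x hx
        rw [Set.uIcc_of_le h1] at hx
        have : (δ - x)/δ ≤ 0 :=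
          div_nonpos_of_nonpos_of_nonneg (by linarith [hx.1]) h0.le
        simp [max_eq_left this]
    have hb : ∫ x in (0:ℝ)..δ, max 0 ((δ - x)/δ) ≤ ∫ _x in (0:ℝ)..δ, (1:ℝ) := by
      apply intervalIntegral.integral_mono_on h0.le hia
        (by apply Continuous.intervalIntegrable; fun_prop)
      intro x hx
      apply max_le (by norm_num)
      rw [div_le_one h0]
      linarith [hx.1]
    rw [hz, add_zero]
    calc _ ≤ ∫ _x in (0:ℝ)..δ, (1:ℝ) := hb
      _ = δ := by simp
  have hsplit : ∫ x in (0:ℝ)..1, lowf δ x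
      = (∫ x in (0:ℝ)..1, Real.exp (-(Real.log 3) * x))
        - (2/3) * ∫ x in (0:ℝ)..1, max 0 ((δ - x)/δ) := by
    unfold lowf
    rw [← intervalIntegral.integral_const_mul]
    rw [← intervalIntegral.integral_sub]
    · apply Continuous.intervalIntegrable; fun_prop
    · apply Continuous.intervalIntegrable; fun_prop
  rw [hsplit, integral_exp_base]
  have : (2:ℝ)/3 * ∫ x in (0:ℝ)..1, max 0 ((δ - x)/δ) ≤ (2/3) * δ := by
    apply mul_le_mul_of_nonneg_left hramp (by norm_num)
  linarith

end Sandwich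

section CircleFns

lemma coe_fract (t : ℝ) : ((t : UnitAddCircle)) = ((Int.fract t : ℝ) : UnitAddCircle) := by
  have : t = Int.fract t + (⌊t⌋ : ℝ) := by rw [Int.fract]; ring
  conv_lhs => rw [this]
  rw [AddCircle.coe_add]
  have hz : (((⌊t⌋ : ℝ)) : UnitAddCircle) = 0 := by
    have h2 : (((⌊t⌋ : ℝ)) : UnitAddCircle) = ⌊t⌋ • (((1:ℝ)) : UnitAddCircle) := by
      rw [← QuotientAddGroup.mk_zsmul]
      norm_num
    rw [h2, AddCircle.coe_period, smul_zero]
  rw [hz, add_zero]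

noncomputable def upC (δ : ℝ) (h0 : 0 < δ) (h1 : δ ≤ 1) : C(UnitAddCircle, ℝ) :=
  ⟨AddCircle.liftIco 1 0 (upf δ),
   AddCircle.liftIco_continuous (upf_endpoints h0 h1) (upf_cont δ).continuousOn⟩

noncomputable def lowC (δ : ℝ) (h0 : 0 < δ) (h1 : δ ≤ 1) : C(UnitAddCircle, ℝ) :=
  ⟨AddCircle.liftIco 1 0 (lowf δ),
   AddCircle.liftIco_continuous (lowf_endpoints h0 h1) (lowf_cont δ).continuousOn⟩

lemma upC_coe (δ : ℝ) (h0 : 0 < δ) (h1 : δ ≤ 1) (t : ℝ) :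
    upC δ h0 h1 ↑t = upf δ (Int.fract t) := by
  show AddCircle.liftIco 1 0 (upf δ) ↑t = _
  rw [coe_fract]
  exact AddCircle.liftIco_coe_apply (by simp [Int.fract_nonneg, Int.fract_lt_one])

lemma lowC_coe (δ : ℝ) (h0 : 0 < δ) (h1 : δ ≤ 1) (t : ℝ) :
    lowC δ h0 h1 ↑t = lowf δ (Int.fract t) := by
  show AddCircle.liftIco 1 0 (lowf δ) ↑t = _
  rw [coe_fract]
  exact AddCircle.liftIco_coe_apply (by simp [Int.fract_nonneg, Int.fract_lt_one])

lemma gfun_le_upC (δ : ℝ) (h0 : 0 < δ) (h1 : δ ≤ 1) (t : ℝ) :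
    gfun t ≤ upC δ h0 h1 ↑t := by
  rw [upC_coe]
  unfold gfun upf
  have : (0:ℝ) ≤ (2/3) * max 0 ((Int.fract t - (1-δ))/δ) := by positivity
  linarith

lemma lowC_le_gfun (δ : ℝ) (h0 : 0 < δ) (h1 : δ ≤ 1) (t : ℝ) :
    lowC δ h0 h1 ↑t ≤ gfun t := by
  rw [lowC_coe]
  unfold gfun lowf
  have : (0:ℝ) ≤ (2/3) * max 0 ((δ - Int.fract t)/δ) := by positivity
  linarith

lemma integral_liftIco (f : ℝ → ℝ) (hf : ContinuousOn f (Set.Icc 0 1))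
    (hend : f 0 = f (0+1)) :
    ∫ y, (AddCircle.liftIco 1 0 f) y ∂(haarAddCircle) = ∫ x in (0:ℝ)..1, f x := by
  rw [← vol_eq_haar]
  rw [← AddCircle.integral_preimage 1 0 (AddCircle.liftIco 1 0 f)]
  rw [zero_add]
  have heq : Set.EqOn (fun a : ℝ => (AddCircle.liftIco 1 0 f) ↑a) f (Set.Ioc 0 1) := by
    intro a ha
    rcases lt_or_eq_of_le ha.2 with h | h
    · exact AddCircle.liftIco_coe_apply (by simp [ha.1.le, h])
    · subst h
      have h1 : ((1:ℝ) : UnitAddCircle) = ((0:ℝ) : UnitAddCircle) := by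
        simpa using AddCircle.coe_period (p := (1:ℝ))
      show (AddCircle.liftIco 1 0 f) ↑(1:ℝ) = f 1
      rw [h1, AddCircle.liftIco_coe_apply (by simp : (0:ℝ) ∈ Set.Ico (0:ℝ) (0+1))]
      rw [hend, zero_add]
  rw [MeasureTheory.setIntegral_congr_fun measurableSet_Ioc heq]
  rw [intervalIntegral.integral_of_le zero_le_one]

lemma upC_integral_le (δ : ℝ) (h0 : 0 < δ) (h1 : δ ≤ 1) :
    ∫ y, upC δ h0 h1 y ∂haarAddCircle ≤ Ival + (2/3) * δ := by
  have := integral_liftIco (upf δ) (upf_cont δ).continuousOn (upf_endpoints h0 h1)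
  calc ∫ y, upC δ h0 h1 y ∂haarAddCircle = ∫ x in (0:ℝ)..1, upf δ x := this
    _ ≤ _ := upf_integral_le h0 h1

lemma lowC_integral_ge (δ : ℝ) (h0 : 0 < δ) (h1 : δ ≤ 1) :
    Ival - (2/3) * δ ≤ ∫ y, lowC δ h0 h1 y ∂haarAddCircle := by
  have := integral_liftIco (lowf δ) (lowf_cont δ).continuousOn (lowf_endpoints h0 h1)
  calc Ival - (2/3)*δ ≤ ∫ x in (0:ℝ)..1, lowf δ x := lowf_integral_ge h0 h1
    _ = _ := this.symm

end CircleFns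

section AvgMain

lemma coe_sub_nsmul (x γ : ℝ) (b : ℕ) :
    ((x - b * γ : ℝ) : UnitAddCircle) = ↑x + b • ((-γ : ℝ) : UnitAddCircle) := by
  have h1 : (x - b * γ : ℝ) = x + b • (-γ : ℝ) := by
    rw [nsmul_eq_mul]; ring
  rw [h1, AddCircle.coe_add, ← QuotientAddGroup.mk_nsmul]

theorem avg_gfun {γ : ℝ} (hγ : ∀ n : ℤ, n ≠ 0 → fourier n (((-γ : ℝ)) : UnitAddCircle) ≠ 1) :
    ∀ ε > (0:ℝ), ∃ B₀ : ℕ, ∀ B ≥ B₀, ∀ x : ℝ,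
      |(B:ℝ)⁻¹ * (∑ b ∈ range B, gfun (x - b * γ)) - Ival| ≤ ε := by
  intro ε hε
  set δ : ℝ := min 1 (ε/2) with hδdef
  have h0 : 0 < δ := lt_min one_pos (by linarith)
  have h1 : δ ≤ 1 := min_le_left _ _
  have hδε : (2/3) * δ + ε/2 ≤ ε := by
    have : δ ≤ ε/2 := min_le_right _ _
    linarith
  obtain ⟨B₁, hB₁⟩ := weylP_real hγ (upC δ h0 h1) (ε/2) (by linarith)
  obtain ⟨B₂, hB₂⟩ := weylP_real hγ (lowC δ h0 h1) (ε/2) (by linarith)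
  refine ⟨max (max B₁ B₂) 1, fun B hB x => ?_⟩
  have hBpos : (0:ℝ) < B := by
    have : (1:ℕ) ≤ B := le_trans (le_max_right _ _) hB
    exact_mod_cast this
  have hpt : ∀ b : ℕ, ((x - b * γ : ℝ) : UnitAddCircle)
      = ↑x + b • (((-γ : ℝ)) : UnitAddCircle) := fun b => coe_sub_nsmul x γ b
  have hup := hB₁ B (le_trans (le_max_left _ _) (le_trans (le_max_left _ _) hB)) ↑x
  have hlow := hB₂ B (le_trans (le_max_right _ _) (le_trans (le_max_left _ _) hB)) ↑x
  rw [abs_le] at hup hlow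
  have hsum_up : ∑ b ∈ range B, gfun (x - b * γ)
      ≤ ∑ b ∈ range B, upC δ h0 h1 (↑x + b • (((-γ : ℝ)) : UnitAddCircle)) := by
    apply Finset.sum_le_sum
    intro b _
    rw [← hpt b]
    exact gfun_le_upC δ h0 h1 _
  have hsum_low : ∑ b ∈ range B, lowC δ h0 h1 (↑x + b • (((-γ : ℝ)) : UnitAddCircle))
      ≤ ∑ b ∈ range B, gfun (x - b * γ) := by
    apply Finset.sum_le_sum
    intro b _
    rw [← hpt b]
    exact lowC_le_gfun δ h0 h1 _
  have hinv : (0:ℝ) ≤ (B:ℝ)⁻¹ := by positivity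
  rw [abs_le]
  constructor
  · -- lower bound
    have c1 : (B:ℝ)⁻¹ * ∑ b ∈ range B, lowC δ h0 h1 (↑x + b • (((-γ : ℝ)) : UnitAddCircle))
        ≤ (B:ℝ)⁻¹ * ∑ b ∈ range B, gfun (x - b * γ) := by
      exact mul_le_mul_of_nonneg_left hsum_low hinv
    have c2 := hlow.1
    have c3 := lowC_integral_ge δ h0 h1
    linarith
  · have c1 : (B:ℝ)⁻¹ * ∑ b ∈ range B, gfun (x - b * γ)
        ≤ (B:ℝ)⁻¹ * ∑ b ∈ range B, upC δ h0 h1 (↑x + b • (((-γ : ℝ)) : UnitAddCircle)) := by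
      exact mul_le_mul_of_nonneg_left hsum_up hinv
    have c2 := hup.2
    have c3 := upC_integral_le δ h0 h1
    linarith

end AvgMain

section Irrational

lemma nat_log_ne (a b : ℕ) (ha : 0 < a) : (a:ℝ) * Real.log 5 ≠ (b:ℝ) * Real.log 3 := by
  intro h
  have h5 : Real.log ((5^a : ℕ) : ℝ) = Real.log ((3^b : ℕ) : ℝ) := by
    push_cast
    rw [Real.log_pow, Real.log_pow]
    exact_mod_cast h
  have hpowR : ((5^a : ℕ) : ℝ) = ((3^b : ℕ) : ℝ) :=
    Real.log_injOn_pos (Set.mem_Ioi.mpr (by positivity)) (Set.mem_Ioi.mpr (by positivity)) h5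
  have hpow : (5:ℕ)^a = 3^b := by exact_mod_cast hpowR
  have h51 : (5:ℕ) ∣ 3^b := hpow ▸ dvd_pow_self 5 ha.ne'
  have h53 : (5:ℕ) ∣ 3 := Nat.Prime.dvd_of_dvd_pow (by norm_num) h51
  exact absurd h53 (by norm_num)

lemma int_log_ne (n m : ℤ) (hn : n ≠ 0) : (n:ℝ) * Real.log 5 ≠ (m:ℝ) * Real.log 3 := by
  intro h
  have l5 : (0:ℝ) < Real.log 5 := Real.log_pos (by norm_num)
  have l3 : (0:ℝ) < Real.log 3 := Real.log_pos (by norm_num)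
  rcases lt_or_gt_of_ne hn with hneg | hpos
  · have hm : (m:ℝ) * Real.log 3 < 0 := by
      rw [← h]
      apply mul_neg_of_neg_of_pos _ l5
      exact_mod_cast hneg
    have hmneg : m < 0 := by
      by_contra hc
      push_neg at hc
      nlinarith [mul_nonneg (show (0:ℝ) ≤ (m:ℝ) by exact_mod_cast hc) l3.le]
    apply nat_log_ne (-n).toNat (-m).toNat (by omega)
    have e1 : (((-n).toNat : ℕ) : ℝ) = -(n:ℝ) := by
      have := Int.toNat_of_nonneg (show (0:ℤ) ≤ -n by omega)
      exact_mod_cast congrArg (Int.cast : ℤ → ℝ) this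
    have e2 : (((-m).toNat : ℕ) : ℝ) = -(m:ℝ) := by
      have := Int.toNat_of_nonneg (show (0:ℤ) ≤ -m by omega)
      exact_mod_cast congrArg (Int.cast : ℤ → ℝ) this
    rw [e1, e2]
    linarith [h]
  · have hm : 0 < (m:ℝ) * Real.log 3 := by
      rw [← h]
      apply mul_pos _ l5
      exact_mod_cast hpos
    have hmpos : 0 < m := by
      by_contra hc
      push_neg at hc
      nlinarith [mul_nonpos_of_nonpos_of_nonneg (show (m:ℝ) ≤ 0 by exact_mod_cast hc) l3.le]
    apply nat_log_ne n.toNat m.toNat (by omega)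
    have e1 : ((n.toNat : ℕ) : ℝ) = (n:ℝ) := by
      have := Int.toNat_of_nonneg (show (0:ℤ) ≤ n by omega)
      exact_mod_cast congrArg (Int.cast : ℤ → ℝ) this
    have e2 : ((m.toNat : ℕ) : ℝ) = (m:ℝ) := by
      have := Int.toNat_of_nonneg (show (0:ℤ) ≤ m by omega)
      exact_mod_cast congrArg (Int.cast : ℤ → ℝ) this
    rw [e1, e2]
    exact h

lemma fourier_ne_one (n : ℤ) (hn : n ≠ 0) :
    fourier n (((-(Real.log 5 / Real.log 3) : ℝ)) : UnitAddCircle) ≠ 1 := by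
  intro h
  rw [fourier_coe_apply, Complex.exp_eq_one_iff] at h
  obtain ⟨m, hm⟩ := h
  have hne : (2 * (π:ℂ) * Complex.I) ≠ 0 := by
    simp [Real.pi_ne_zero, Complex.I_ne_zero]
  rw [Complex.ofReal_one, div_one] at hm
  have h2 : ((n:ℂ) * ((-(Real.log 5 / Real.log 3) : ℝ) : ℂ)) * (2 * (π:ℂ) * Complex.I)
      = (m:ℂ) * (2 * (π:ℂ) * Complex.I) := by linear_combination hm
  have hkey : (n:ℂ) * ((-(Real.log 5 / Real.log 3) : ℝ) : ℂ) = (m:ℂ) :=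
    mul_right_cancel₀ hne h2
  have hreal : (n:ℝ) * (-(Real.log 5 / Real.log 3)) = (m:ℝ) := by
    exact_mod_cast hkey
  have l3 : (0:ℝ) < Real.log 3 := Real.log_pos (by norm_num)
  have e : (-(Real.log 5 / Real.log 3)) * Real.log 3 = -Real.log 5 := by
    field_simp
  have hfin : (n:ℝ) * (-(Real.log 5)) = (m:ℝ) * Real.log 3 := by
    calc (n:ℝ) * (-(Real.log 5)) = ((n:ℝ) * (-(Real.log 5 / Real.log 3))) * Real.log 3 := by
          rw [mul_assoc, e]
      _ = (m:ℝ) * Real.log 3 := by rw [hreal]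
  apply int_log_ne (-n) m (by omega)
  push_cast
  linarith [hfin]

end Irrational

section Arith

def BN (N : ℕ) : ℕ := Nat.log 5 N + 1

def AN (N b : ℕ) : ℕ := Nat.log 3 (N / 5 ^ b)

lemma S17_double (N : ℕ) : S17 N
    = ∑ b ∈ range (N+1), ∑ a ∈ range (N+1),
        (if 3^a * 5^b ≤ N then (3:ℝ)^a * 5^b else 0) := by
  rw [S17, Finset.sum_filter, Finset.sum_product_right]

lemma pow5_le (N b : ℕ) (hN : N ≠ 0) (hb : b < BN N) : 5^b ≤ N := by
  have : b ≤ Nat.log 5 N := by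
    unfold BN at hb; omega
  exact (Nat.le_log_iff_pow_le (by norm_num) hN).mp this

lemma cond_iff (N a b : ℕ) (hN : N ≠ 0) (h5 : 5^b ≤ N) :
    (3^a * 5^b ≤ N ↔ a < AN N b + 1) := by
  have h5pos : 0 < 5^b := Nat.pow_pos (by norm_num)
  have hdiv : N / 5^b ≠ 0 := by
    have : 1 ≤ N / 5^b := (Nat.one_le_div_iff h5pos).mpr h5
    omega
  rw [Nat.lt_succ_iff]
  constructor
  · intro h
    apply (Nat.le_log_iff_pow_le (by norm_num) hdiv).mpr
    exact (Nat.le_div_iff_mul_le h5pos).mpr h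
  · intro h
    have := (Nat.le_log_iff_pow_le (by norm_num : (1:ℕ) < 3) hdiv).mp h
    exact (Nat.le_div_iff_mul_le h5pos).mp this

lemma S17_rows (N : ℕ) (hN : N ≠ 0) :
    S17 N = ∑ b ∈ range (BN N), (5:ℝ)^b * ∑ a ∈ range (AN N b + 1), (3:ℝ)^a := by
  rw [S17_double]
  have hBle : BN N ≤ N + 1 := by
    have := Nat.log_le_self 5 N
    unfold BN; omega
  rw [← Finset.sum_subset (Finset.range_subset_range.mpr hBle)]
  · apply Finset.sum_congr rfl
    intro b hb
    rw [Finset.mem_range] at hb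
    have h5 : 5^b ≤ N := pow5_le N b hN hb
    have hAle : AN N b + 1 ≤ N + 1 := by
      have h1 : AN N b ≤ N / 5^b := Nat.log_le_self 3 _
      have h2 : N / 5^b ≤ N := Nat.div_le_self _ _
      omega
    rw [← Finset.sum_subset (Finset.range_subset_range.mpr hAle)]
    · rw [Finset.mul_sum]
      apply Finset.sum_congr rfl
      intro a ha
      rw [Finset.mem_range] at ha
      rw [if_pos ((cond_iff N a b hN h5).mpr ha)]
      ring
    · intro a _ ha
      rw [Finset.mem_range] at ha
      rw [if_neg]
      intro hcon
      exact ha ((cond_iff N a b hN h5).mp hcon)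
  · intro b _ hb
    rw [Finset.mem_range] at hb
    apply Finset.sum_eq_zero
    intro a _
    rw [if_neg]
    intro hcon
    apply hb
    have h5N : 5^b ≤ N := le_trans (Nat.le_mul_of_pos_left _ (Nat.pow_pos (by norm_num))) hcon
    have : b ≤ Nat.log 5 N := (Nat.le_log_iff_pow_le (by norm_num) hN).mpr h5N
    unfold BN; omega

end Arith

section KeyIdent

noncomputable def gam : ℝ := Real.log 5 / Real.log 3

noncomputable def xN (N : ℕ) : ℝ := Real.log N / Real.log 3

lemma key_fract (N b : ℕ) (hN : N ≠ 0) (h5 : 5^b ≤ N) :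
    (3:ℝ)^(AN N b) * 5^b = N * gfun (xN N - b * gam) := by
  have l3 : (0:ℝ) < Real.log 3 := Real.log_pos (by norm_num)
  set A := AN N b with hA
  set q : ℕ := 3^A * 5^b with hq
  have h5pos : 0 < 5^b := Nat.pow_pos (by norm_num)
  have hdiv : N / 5^b ≠ 0 := by
    have : 1 ≤ N / 5^b := (Nat.one_le_div_iff h5pos).mpr h5
    omega
  have hqle : q ≤ N := by
    have h1 : 3^A ≤ N / 5^b := Nat.pow_log_le_self 3 hdiv
    exact (Nat.le_div_iff_mul_le h5pos).mp h1
  have hlt : N < 3 * q := by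
    have h1 : N / 5^b < 3^(A+1) := by
      have := Nat.lt_pow_succ_log_self (by norm_num : 1 < 3) (N / 5^b)
      simpa [hA, AN] using this
    have h2 : N < 5^b * (N / 5^b + 1) := by
      have hdm := Nat.div_add_mod N (5^b)
      have hm : N % 5^b < 5^b := Nat.mod_lt _ h5pos
      rw [Nat.mul_succ]
      omega
    have h3 : 5^b * (N / 5^b + 1) ≤ 5^b * 3^(A+1) := by
      apply Nat.mul_le_mul_left
      omega
    calc N < 5^b * (N / 5^b + 1) := h2
      _ ≤ 5^b * 3^(A+1) := h3
      _ = 3 * q := by rw [hq]; ring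
  have hqpos : 0 < q := Nat.mul_pos (Nat.pow_pos (by norm_num)) h5pos
  have hNR : (0:ℝ) < N := by exact_mod_cast Nat.pos_of_ne_zero hN
  have hqR : (0:ℝ) < q := by exact_mod_cast hqpos
  have hlogq : Real.log q = A * Real.log 3 + b * Real.log 5 := by
    rw [hq]
    push_cast
    rw [Real.log_mul (by positivity) (by positivity), Real.log_pow, Real.log_pow]
  set u : ℝ := (Real.log N - Real.log q) / Real.log 3 with hu
  have hxu : xN N - b * gam = A + u := by
    rw [xN, gam, hu, hlogq]
    field_simp
    ring
  have hu0 : 0 ≤ u := by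
    apply div_nonneg _ l3.le
    have : Real.log q ≤ Real.log N := Real.log_le_log hqR (by exact_mod_cast hqle)
    linarith
  have hu1 : u < 1 := by
    rw [hu, div_lt_one l3]
    have h3q : Real.log N < Real.log (3 * q) := by
      apply Real.log_lt_log hNR
      exact_mod_cast hlt
    rw [Real.log_mul (by norm_num) hqR.ne'] at h3q
    linarith
  have hfract : Int.fract (xN N - b * gam) = u := by
    rw [hxu]
    have : (A:ℝ) + u = ((A:ℕ):ℝ) + u := by norm_num
    rw [this, Int.fract_natCast_add, Int.fract_eq_self.mpr ⟨hu0, hu1⟩]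
  rw [gfun, hfract]
  have : -Real.log 3 * u = Real.log q - Real.log N := by
    rw [hu]
    field_simp
    ring
  rw [this, Real.exp_sub, Real.exp_log hqR, Real.exp_log hNR]
  rw [hq]
  push_cast
  field_simp

lemma S17_final (N : ℕ) (hN : N ≠ 0) :
    S17 N = (3/2) * N * (∑ b ∈ range (BN N), gfun (xN N - b * gam))
      - (1/2) * ∑ b ∈ range (BN N), (5:ℝ)^b := by
  rw [S17_rows N hN, Finset.mul_sum, Finset.mul_sum, ← Finset.sum_sub_distrib]
  apply Finset.sum_congr rfl
  intro b hb
  rw [Finset.mem_range] at hb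
  have h5 : 5^b ≤ N := pow5_le N b hN hb
  have hgeom : ∑ a ∈ range (AN N b + 1), (3:ℝ)^a = ((3:ℝ)^(AN N b + 1) - 1) / 2 := by
    rw [geom_sum_eq (by norm_num : (3:ℝ) ≠ 1)]
    norm_num
  rw [hgeom]
  have hkey := key_fract N b hN h5
  have : (3:ℝ)^(AN N b + 1) = 3 * ((3:ℝ)^(AN N b)) := by ring
  rw [this]
  have h5bpos : (0:ℝ) < (5:ℝ)^b := by positivity
  nlinarith [hkey]

end KeyIdent

section Limits

lemma BN_tendsto : Tendsto (fun N => BN N) atTop atTop := by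
  rw [tendsto_atTop_atTop]
  intro M
  refine ⟨5^M, fun N hN => ?_⟩
  have hN0 : N ≠ 0 := by
    have : 0 < 5^M := Nat.pow_pos (by norm_num)
    omega
  have : M ≤ Nat.log 5 N := (Nat.le_log_iff_pow_le (by norm_num) hN0).mpr hN
  unfold BN
  omega

lemma avg_tendsto : Tendsto
    (fun N : ℕ => ((BN N : ℝ))⁻¹ * ∑ b ∈ range (BN N), gfun (xN N - b * gam))
    atTop (nhds Ival) := by
  rw [Metric.tendsto_atTop]
  intro ε hε
  obtain ⟨B₀, hB₀⟩ := avg_gfun (γ := gam) (fun n hn => by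
    have := fourier_ne_one n hn
    simpa [gam] using this) (ε/2) (by linarith)
  obtain ⟨N₀, hN₀⟩ := (tendsto_atTop_atTop.mp BN_tendsto) B₀
  refine ⟨N₀, fun N hN => ?_⟩
  rw [Real.dist_eq]
  calc |_ - Ival| ≤ ε/2 := hB₀ (BN N) (hN₀ N hN) (xN N)
    _ < ε := by linarith

lemma loginv_tendsto : Tendsto (fun N : ℕ => 1 / Real.log N) atTop (nhds 0) := by
  have h1 : Tendsto (fun N : ℕ => Real.log N) atTop atTop :=
    Real.tendsto_log_atTop.comp tendsto_natCast_atTop_atTop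
  simpa [one_div, Pi.inv_def] using h1.inv_tendsto_atTop

lemma log_bounds (N : ℕ) (hN : 2 ≤ N) :
    Real.log N / Real.log 5 < (BN N : ℝ) ∧
      (BN N : ℝ) ≤ Real.log N / Real.log 5 + 1 := by
  have l5 : (0:ℝ) < Real.log 5 := Real.log_pos (by norm_num)
  have hN0 : N ≠ 0 := by omega
  have hNR : (1:ℝ) ≤ N := by exact_mod_cast (by omega : 1 ≤ N)
  constructor
  · have h1 : N < 5 ^ (BN N) := by
      have := Nat.lt_pow_succ_log_self (by norm_num : 1 < 5) N
      simpa [BN] using this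
    have h2 : Real.log N < (BN N : ℝ) * Real.log 5 := by
      calc Real.log N < Real.log ((5:ℝ) ^ (BN N)) := by
            apply Real.log_lt_log (by linarith)
            exact_mod_cast h1
        _ = (BN N : ℝ) * Real.log 5 := by rw [Real.log_pow]
    rw [div_lt_iff₀ l5]
    linarith
  · have h1 : 5 ^ (Nat.log 5 N) ≤ N := Nat.pow_log_le_self 5 hN0
    have h2 : ((Nat.log 5 N : ℝ)) * Real.log 5 ≤ Real.log N := by
      calc ((Nat.log 5 N : ℝ)) * Real.log 5 = Real.log ((5:ℝ) ^ (Nat.log 5 N)) := by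
            rw [Real.log_pow]
        _ ≤ Real.log N := by
            apply Real.log_le_log (by positivity)
            exact_mod_cast h1
    have h3 : (BN N : ℝ) = (Nat.log 5 N : ℝ) + 1 := by
      unfold BN
      push_cast
      ring
    have h4 : (Nat.log 5 N : ℝ) ≤ Real.log N / Real.log 5 := by
      rw [le_div_iff₀ l5]
      exact h2
    rw [h3]
    linarith

lemma Bquot_tendsto : Tendsto (fun N : ℕ => (BN N : ℝ) / Real.log N)
    atTop (nhds (1 / Real.log 5)) := by
  have l5 : (0:ℝ) < Real.log 5 := Real.log_pos (by norm_num)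
  have hupper : Tendsto (fun N : ℕ => 1/Real.log 5 + 1/Real.log N) atTop
      (nhds (1/Real.log 5)) := by
    have := (tendsto_const_nhds (x := 1/Real.log 5) (f := atTop (α := ℕ))).add loginv_tendsto
    simpa using this
  apply tendsto_of_tendsto_of_tendsto_of_le_of_le'
    (tendsto_const_nhds : Tendsto (fun _ : ℕ => 1 / Real.log 5) atTop _) hupper
  · filter_upwards [eventually_ge_atTop 2] with N hN
    have hlogN : (0:ℝ) < Real.log N := by
      apply Real.log_pos
      exact_mod_cast (by omega : (1:ℕ) < N)
    have h := (log_bounds N hN).1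
    rw [div_le_div_iff₀ l5 hlogN]
    rw [div_lt_iff₀ l5] at h
    nlinarith
  · filter_upwards [eventually_ge_atTop 2] with N hN
    have hlogN : (0:ℝ) < Real.log N := by
      apply Real.log_pos
      exact_mod_cast (by omega : (1:ℕ) < N)
    rw [div_le_iff₀ hlogN]
    have e : (1 / Real.log 5 + 1 / Real.log ↑N) * Real.log ↑N
        = Real.log ↑N / Real.log 5 + 1 := by
      field_simp
    rw [e]
    exact (log_bounds N hN).2

lemma R_tendsto : Tendsto
    (fun N : ℕ => (∑ b ∈ range (BN N), (5:ℝ)^b) / ((N:ℝ) * Real.log N))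
    atTop (nhds 0) := by
  apply tendsto_of_tendsto_of_tendsto_of_le_of_le'
    (tendsto_const_nhds : Tendsto (fun _ : ℕ => (0:ℝ)) atTop _)
    (by simpa using loginv_tendsto.const_mul (5/4:ℝ) :
      Tendsto (fun N : ℕ => (5/4) * (1/Real.log N)) atTop (nhds 0))
  · filter_upwards [eventually_ge_atTop 2] with N hN
    have hlogN : (0:ℝ) < Real.log N := by
      apply Real.log_pos
      exact_mod_cast (by omega : (1:ℕ) < N)
    have hNR : (0:ℝ) < N := by positivity
    positivity
  · filter_upwards [eventually_ge_atTop 2] with N hN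
    have hlogN : (0:ℝ) < Real.log N := by
      apply Real.log_pos
      exact_mod_cast (by omega : (1:ℕ) < N)
    have hNR : (0:ℝ) < N := by
      exact_mod_cast (by omega : 0 < N)
    have hsum : ∑ b ∈ range (BN N), (5:ℝ)^b ≤ (5/4) * N := by
      rw [geom_sum_eq (by norm_num : (5:ℝ) ≠ 1)]
      have h1 : (5:ℝ)^(BN N) ≤ 5 * N := by
        have := Nat.pow_log_le_self 5 (by omega : N ≠ 0)
        have h2 : (5:ℝ)^(Nat.log 5 N) ≤ N := by exact_mod_cast this
        calc (5:ℝ)^(BN N) = 5 * (5:ℝ)^(Nat.log 5 N) := by rw [BN]; ring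
          _ ≤ 5 * N := by linarith
      rw [div_le_iff₀ (by norm_num : (0:ℝ) < 5 - 1)]
      linarith
    rw [div_le_iff₀ (by positivity : (0:ℝ) < (N:ℝ) * Real.log N)]
    calc ∑ b ∈ range (BN N), (5:ℝ)^b ≤ (5/4) * N := hsum
      _ ≤ 5/4 * (1/Real.log N) * (N * Real.log N) := by
          rw [mul_comm (N:ℝ) (Real.log N), ← mul_assoc]
          rw [mul_assoc (5/4:ℝ) _ _, one_div, inv_mul_cancel₀ hlogN.ne', mul_one]

end Limits

theorem weighted_lattice_sum_asymptotic :
    Filter.Tendsto (fun N : ℕ => S17 N / ((N : ℝ) * Real.log N))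
      Filter.atTop (nhds (1 / (Real.log 3 * Real.log 5))) := by
  have l3 : (0:ℝ) < Real.log 3 := Real.log_pos (by norm_num)
  have l5 : (0:ℝ) < Real.log 5 := Real.log_pos (by norm_num)
  have hEq : ∀ᶠ N in atTop,
      (3/2) * ((BN N : ℝ)/Real.log N)
          * (((BN N : ℝ))⁻¹ * ∑ b ∈ range (BN N), gfun (xN N - b * gam))
        - (1/2) * ((∑ b ∈ range (BN N), (5:ℝ)^b)/((N:ℝ) * Real.log N))
      = S17 N / ((N:ℝ) * Real.log N) := by
    filter_upwards [eventually_ge_atTop 2] with N hN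
    have hN0 : N ≠ 0 := by omega
    have hNR : (0:ℝ) < N := by exact_mod_cast (by omega : 0 < N)
    have hlogN : (0:ℝ) < Real.log N := by
      apply Real.log_pos
      exact_mod_cast (by omega : (1:ℕ) < N)
    have hB0 : ((BN N : ℕ) : ℝ) ≠ 0 := by
      have : 1 ≤ BN N := by unfold BN; omega
      positivity
    rw [S17_final N hN0]
    field_simp
    simp_rw [mul_comm gam]
    ring
  have hlim : Tendsto (fun N : ℕ =>
      (3/2) * ((BN N : ℝ)/Real.log N)
          * (((BN N : ℝ))⁻¹ * ∑ b ∈ range (BN N), gfun (xN N - b * gam))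
        - (1/2) * ((∑ b ∈ range (BN N), (5:ℝ)^b)/((N:ℝ) * Real.log N)))
      atTop (nhds ((3/2) * (1/Real.log 5) * Ival - (1/2) * 0)) :=
    ((Bquot_tendsto.const_mul (3/2)).mul avg_tendsto).sub (R_tendsto.const_mul (1/2))
  have hval : (3/2) * (1/Real.log 5) * Ival - (1/2) * 0 = 1/(Real.log 3 * Real.log 5) := by
    rw [Ival]
    field_simp
    ring
  rw [hval] at hlim
  exact hlim.congr' hEq
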